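/- Let n ≥ 2 and let K = {x ∈ ℝⁿ : x₁ + ⋯ + xₙ = 0 and |x_i − x_j| ≤ π/2 for all i, j}. Then the extreme points of K are exactly the vectors x for which there exists a subset S ⊆ {1,…,n} with 1 ≤ |S| ≤ n−1 such that x_i = (π/2)(1 − |S|/n) for i ∈ S and x_i = −(π/2)(|S|/n) for i ∉ S. (This is the description (3.2) of ∂ₑΩ for the root system A_{n−1} of 𝔰𝔩(n,ℝ): ∂ₑΩ = ∐_{q=1}^{n−1} 𝒲(Y_q) with Y_q = (π/2)(e₁+⋯+e_q − (q/n)(e₁+⋯+eₙ)) and 𝒲 the symmetric group permuting coordinates.) -/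
import Mathlib
set_option maxHeartbeats 1000000

open Real

theorem extremePoints_omega_An (n : ℕ) (hn : 2 ≤ n) :
    Set.extremePoints ℝ
      {x : Fin n → ℝ | (∑ i, x i) = 0 ∧ ∀ i j : Fin n, |x i - x j| ≤ π / 2} =
    {x : Fin n → ℝ | ∃ S : Finset (Fin n), 1 ≤ S.card ∧ S.card ≤ n - 1 ∧
        ∀ i : Fin n,
          (i ∈ S → x i = (π / 2) * (1 - (S.card : ℝ) / (n : ℝ))) ∧
          (i ∉ S → x i = -((π / 2) * ((S.card : ℝ) / (n : ℝ))))} := by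
  classical
  have hnR : (0:ℝ) < n := by positivity
  have hpi : (0:ℝ) < π / 2 := by positivity
  ext x
  simp only [Set.mem_setOf_eq, mem_extremePoints]
  constructor
  · rintro ⟨⟨hsum, hpair⟩, hext⟩
    -- perturbation principle
    have hpert : ∀ d : Fin n → ℝ, (∑ i, d i) = 0 →
        (∀ i j, |x i + d i - (x j + d j)| ≤ π / 2) →
        (∀ i j, |x i - d i - (x j - d j)| ≤ π / 2) → d = 0 := by
      intro d hd h1 h2
      have hmem1 : (∑ i, (x + d) i) = 0 ∧ ∀ i j, |(x + d) i - (x + d) j| ≤ π / 2 := by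
        refine ⟨?_, fun i j => h1 i j⟩
        simp only [Pi.add_apply, Finset.sum_add_distrib, hsum, hd, add_zero]
      have hmem2 : (∑ i, (x - d) i) = 0 ∧ ∀ i j, |(x - d) i - (x - d) j| ≤ π / 2 := by
        refine ⟨?_, fun i j => h2 i j⟩
        simp only [Pi.sub_apply, Finset.sum_sub_distrib, hsum, hd, sub_zero]
      have hseg : x ∈ openSegment ℝ (x + d) (x - d) := by
        refine ⟨1/2, 1/2, by norm_num, by norm_num, by norm_num, ?_⟩
        funext i
        simp only [Pi.add_apply, Pi.sub_apply, Pi.smul_apply, smul_eq_mul]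
        ring
      have heq := (hext _ hmem1 _ hmem2 hseg).1
      funext i
      have := congrFun heq i
      simp only [Pi.add_apply, Pi.zero_apply] at this ⊢
      linarith
    have hne : (Finset.univ : Finset (Fin n)).Nonempty := ⟨⟨0, by omega⟩, Finset.mem_univ _⟩
    set M : ℝ := Finset.univ.sup' hne x with hMdef
    set m : ℝ := Finset.univ.inf' hne x with hmdef
    have hMmax : ∀ i, x i ≤ M := fun i => Finset.le_sup' x (Finset.mem_univ i)
    have hmmin : ∀ i, m ≤ x i := fun i => Finset.inf'_le x (Finset.mem_univ i)
    obtain ⟨iM, -, hiM⟩ := Finset.exists_mem_eq_sup' hne x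
    obtain ⟨im, -, him⟩ := Finset.exists_mem_eq_inf' hne x
    rw [← hMdef] at hiM
    rw [← hmdef] at him
    clear_value M m
    -- Step 1 : M - m = π / 2
    have hMm : M - m = π / 2 := by
      have hle : M - m ≤ π / 2 := by
        have := (abs_le.mp (hpair iM im)).2
        rw [← hiM, ← him] at this
        exact this
      rcases lt_or_eq_of_le hle with hlt | h
      · exfalso
        set δ : ℝ := π / 2 - (M - m) with hδdef
        have hδ : 0 < δ := by simp only [hδdef]; linarith
        set i0 : Fin n := ⟨0, by omega⟩
        set i1 : Fin n := ⟨1, by omega⟩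
        have h01 : i0 ≠ i1 := by simp [i0, i1, Fin.ext_iff]
        set d : Fin n → ℝ := fun i =>
          (if i = i0 then δ/4 else 0) - (if i = i1 then δ/4 else 0) with hddef
        have hdb : ∀ i, |d i| ≤ δ/4 := by
          intro i
          simp only [hddef]
          split_ifs <;> rw [abs_le] <;> constructor <;> linarith
        have hdsum : (∑ i, d i) = 0 := by
          simp only [hddef, Finset.sum_sub_distrib, Finset.sum_ite_eq',
            Finset.mem_univ, if_true, sub_self]
        have hxij : ∀ i j, |x i - x j| ≤ M - m := fun i j =>
          abs_le.mpr ⟨by linarith [hMmax j, hmmin i], by linarith [hMmax i, hmmin j]⟩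
        have hbd : ∀ (s : ℝ), s = 1 ∨ s = -1 →
            ∀ i j, |x i + s * d i - (x j + s * d j)| ≤ π / 2 := by
          intro s hs i j
          have h1 := hdb i
          have h2 := hdb j
          have h3 := abs_le.mp (hxij i j)
          rcases hs with hs | hs <;> rw [hs] <;> rw [abs_le] at h1 h2 ⊢ <;>
            constructor <;> simp only [hδdef] at * <;> [skip; skip; skip; skip] <;> linarith
        have hd0 : d = 0 := by
          refine hpert d hdsum (fun i j => ?_) (fun i j => ?_)
          · have := hbd 1 (Or.inl rfl) i j
            simpa using this
          · have := hbd (-1) (Or.inr rfl) i j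
            have e1 : x i + (-1) * d i = x i - d i := by ring
            have e2 : x j + (-1) * d j = x j - d j := by ring
            rw [e1, e2] at this
            exact this
        have : d i0 = 0 := congrFun hd0 i0
        simp [hddef, h01] at this
        linarith
      · exact h.symm ▸ rfl
    -- Step 2 : x takes only the values M and m
    have hval : ∀ k, x k = M ∨ x k = m := by
      by_contra hcon
      push_neg at hcon
      obtain ⟨k, hkM, hkm⟩ := hcon
      set U : Finset (Fin n) := Finset.univ.filter (fun i => x i ≠ M ∧ x i ≠ m) with hUdef
      have hUne : U.Nonempty := ⟨k, by simp [hUdef, hkM, hkm]⟩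
      set γ : ℝ := U.inf' hUne (fun j => min (x j - m) (M - x j)) with hγdef
      have hγpos : 0 < γ := by
        rw [hγdef, Finset.lt_inf'_iff]
        intro j hj
        rw [hUdef, Finset.mem_filter] at hj
        rw [lt_min_iff]
        constructor
        · have := hmmin j; rcases lt_or_eq_of_le this with h | h; · linarith
          · exact absurd h.symm hj.2.2
        · have := hMmax j; rcases lt_or_eq_of_le this with h | h; · linarith
          · exact absurd h hj.2.1
      have hγle : ∀ j ∈ U, γ ≤ x j - m ∧ γ ≤ M - x j := by
        intro j hj
        have h1 := Finset.inf'_le (fun j => min (x j - m) (M - x j)) hj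
        rw [← hγdef] at h1
        exact ⟨le_trans h1 (min_le_left _ _), le_trans h1 (min_le_right _ _)⟩
      set cu : ℝ := (U.card : ℝ) with hcudef
      set cc : ℝ := ((Uᶜ).card : ℝ) with hccdef
      have hcucc : cu + cc = n := by
        rw [hcudef, hccdef, Finset.card_compl, Fintype.card_fin]
        have : U.card ≤ n := by simpa using Finset.card_le_univ U
        push_cast [Nat.cast_sub this]
        ring
      set t : ℝ := γ / n with htdef
      have ht0 : 0 < t := by rw [htdef]; positivity
      have hnt : cu * t + cc * t = γ := by
        have e : cu * t + cc * t = (cu + cc) * t := by ring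
        rw [e, hcucc, htdef, mul_div_cancel₀ _ hnR.ne']
      set d : Fin n → ℝ := fun i => if i ∈ U then -(cc * t) else cu * t with hddef
      have hdsum : (∑ i, d i) = 0 := by
        rw [← Finset.sum_add_sum_compl U, Finset.sum_congr rfl
          (fun i hi => show d i = -(cc * t) by rw [hddef]; exact if_pos hi),
          Finset.sum_congr rfl (fun i hi => show d i = cu * t by
            rw [hddef]; exact if_neg (Finset.mem_compl.mp hi))]
        rw [Finset.sum_const, Finset.sum_const, nsmul_eq_mul, nsmul_eq_mul,
          ← hcudef, ← hccdef]
        ring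
      have hmix : ∀ i j, i ∉ U → j ∈ U → |x i - x j| ≤ π/2 - γ := by
        intro i j hi hj
        obtain ⟨hj1, hj2⟩ := hγle j hj
        rw [hUdef, Finset.mem_filter] at hi
        push_neg at hi
        have hi2 := hi (Finset.mem_univ i)
        by_cases hcase : x i = M
        · rw [hcase, abs_le]; constructor <;> linarith [hmmin j, hMmax j]
        · rw [hi2 hcase, abs_le]; constructor <;> linarith [hmmin j, hMmax j]
      have hbound : ∀ (s : ℝ), s = 1 ∨ s = -1 →
          ∀ i j, |x i + s * d i - (x j + s * d j)| ≤ π / 2 := by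
        intro s hs i j
        by_cases hi : i ∈ U <;> by_cases hj : j ∈ U
        · have e : x i + s * d i - (x j + s * d j) = x i - x j := by
            rw [hddef]; simp only [if_pos hi, if_pos hj]; ring
          rw [e]; exact hpair i j
        · -- i ∈ U, j ∉ U
          have h1 := hmix j i hj hi
          have e : x i + s * d i - (x j + s * d j) = x i - x j - s * γ := by
            rw [hddef]; simp only [if_pos hi, if_neg hj]
            rw [← hnt]; ring
          rw [e]
          rw [abs_sub_comm] at h1
          rw [abs_le] at h1 ⊢
          rcases hs with hs | hs <;> rw [hs] <;> constructor <;> linarith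
        · have h1 := hmix i j hi hj
          have e : x i + s * d i - (x j + s * d j) = x i - x j + s * γ := by
            rw [hddef]; simp only [if_neg hi, if_pos hj]
            rw [← hnt]; ring
          rw [e]
          rw [abs_le] at h1 ⊢
          rcases hs with hs | hs <;> rw [hs] <;> constructor <;> linarith
        · have e : x i + s * d i - (x j + s * d j) = x i - x j := by
            rw [hddef]; simp only [if_neg hi, if_neg hj]; ring
          rw [e]; exact hpair i j
      have hd0 : d = 0 := by
        refine hpert d hdsum (fun i j => ?_) (fun i j => ?_)
        · have := hbound 1 (Or.inl rfl) i j; simpa using this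
        · have := hbound (-1) (Or.inr rfl) i j
          have e1 : x i + (-1) * d i = x i - d i := by ring
          have e2 : x j + (-1) * d j = x j - d j := by ring
          rw [e1, e2] at this; exact this
      have hiMU : iM ∉ U := by
        rw [hUdef, Finset.mem_filter]
        push_neg
        intro _ h
        exact absurd hiM.symm h
      have : d iM = 0 := congrFun hd0 iM
      rw [hddef] at this
      simp only [if_neg hiMU] at this
      have hcu1 : (1:ℝ) ≤ cu := by
        rw [hcudef]
        exact_mod_cast Finset.card_pos.mpr hUne
      nlinarith
    -- Step 3 : assemble
    set S : Finset (Fin n) := Finset.univ.filter (fun i => x i = M) with hSdef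
    have hmem_S : ∀ i, i ∈ S ↔ x i = M := by
      intro i; rw [hSdef, Finset.mem_filter]; simp
    have hSM : ∀ i ∈ S, x i = M := fun i hi => (hmem_S i).mp hi
    have hSm : ∀ i ∉ S, x i = m := by
      intro i hi
      rcases hval i with h | h
      · exact absurd ((hmem_S i).mpr h) hi
      · exact h
    have hiMS : iM ∈ S := (hmem_S iM).mpr hiM.symm
    have hMne : M ≠ m := by intro h; rw [h] at hMm; simp at hMm; linarith
    have himS : im ∉ S := fun h => hMne (him ▸ (hSM im h)).symm
    have hq1 : 1 ≤ S.card := Finset.card_pos.mpr ⟨iM, hiMS⟩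
    have hqn : S.card < n := by
      have h1 : S.card ≤ n := by simpa using Finset.card_le_univ S
      rcases lt_or_eq_of_le h1 with h | h
      · exact h
      · exfalso
        have : S = Finset.univ := Finset.eq_univ_of_card S (by rw [h, Fintype.card_fin])
        exact himS (this ▸ Finset.mem_univ im)
    have hcompl : ((Sᶜ).card : ℝ) = n - S.card := by
      rw [Finset.card_compl, Fintype.card_fin]
      push_cast [Nat.cast_sub hqn.le]
      ring
    have hsum2 : (S.card : ℝ) * M + ((n : ℝ) - S.card) * m = 0 := by
      rw [← hsum, ← Finset.sum_add_sum_compl S,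
        Finset.sum_congr rfl (fun i hi => hSM i hi),
        Finset.sum_congr rfl (fun i hi => hSm i (Finset.mem_compl.mp hi)),
        Finset.sum_const, Finset.sum_const, nsmul_eq_mul, nsmul_eq_mul, hcompl]
    have hM : M = (π / 2) * (1 - (S.card : ℝ) / n) := by
      have hmM : m = M - π/2 := by linarith
      rw [hmM] at hsum2
      field_simp
      nlinarith [hsum2]
    have hm : m = -((π / 2) * ((S.card : ℝ) / n)) := by
      rw [← sub_eq_zero]
      have : m = M - π/2 := by linarith
      rw [this, hM]
      field_simp
      ring
    refine ⟨S, hq1, by omega, fun i => ⟨fun hi => ?_, fun hi => ?_⟩⟩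
    · rw [hSM i hi, hM]
    · rw [hSm i hi, hm]
  · rintro ⟨S, h1, h2, hxS⟩
    have hq : (S.card : ℝ) ≤ n := by exact_mod_cast (le_trans h2 (Nat.sub_le n 1))
    have hqn : S.card ≤ n := le_trans h2 (Nat.sub_le n 1)
    set a : ℝ := (π / 2) * (1 - (S.card : ℝ) / n) with ha
    set b : ℝ := -((π / 2) * ((S.card : ℝ) / n)) with hb
    have hab : a - b = π / 2 := by rw [ha, hb]; field_simp; ring
    clear_value a b
    -- membership
    have hcompl : (Sᶜ.card : ℝ) = n - S.card := by
      rw [Finset.card_compl, Fintype.card_fin]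
      push_cast [Nat.cast_sub hqn]
      ring
    have hsum : (∑ i, x i) = 0 := by
      rw [← Finset.sum_add_sum_compl S]
      rw [Finset.sum_congr rfl (fun i hi => (hxS i).1 hi),
        Finset.sum_congr rfl (fun i hi => (hxS i).2 (Finset.mem_compl.mp hi))]
      rw [Finset.sum_const, Finset.sum_const, nsmul_eq_mul, nsmul_eq_mul, hcompl, ha, hb]
      field_simp
      ring
    have hval : ∀ i, x i = a ∨ x i = b := by
      intro i
      by_cases hi : i ∈ S
      · exact Or.inl ((hxS i).1 hi)
      · exact Or.inr ((hxS i).2 hi)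
    have hpair : ∀ i j : Fin n, |x i - x j| ≤ π / 2 := by
      intro i j
      have hba : b ≤ a := by nlinarith [hab, hpi.le]
      rcases hval i with hi | hi <;> rcases hval j with hj | hj <;>
        rw [hi, hj] <;> rw [abs_le] <;> constructor <;> linarith
    refine ⟨⟨hsum, hpair⟩, ?_⟩
    rintro y ⟨hysum, hypair⟩ z ⟨hzsum, hzpair⟩ ⟨t₁, t₂, ht₁, ht₂, ht, hxyz⟩
    -- for i ∈ S, j ∉ S : y i - y j = π/2 and z i - z j = π/2
    have key : ∀ w : Fin n → ℝ, (∑ i, w i) = 0 → (∀ i j, |w i - w j| ≤ π / 2) →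
        (∀ i ∈ S, ∀ j ∉ S, w i - w j = π / 2) → w = x := by
      intro w hwsum hwpair hw
      obtain ⟨j₀, hj₀⟩ : ∃ j₀, j₀ ∉ S := by
        by_contra h
        push_neg at h
        have : S = Finset.univ := Finset.eq_univ_of_forall h
        rw [this, Finset.card_univ, Fintype.card_fin] at h2
        omega
      have hwS : ∀ i ∈ S, w i = w j₀ + π / 2 := fun i hi => by
        have := hw i hi j₀ hj₀; linarith
      have hwT : ∀ j ∉ S, w j = w j₀ := by
        intro j hj
        obtain ⟨i₀, hi₀⟩ : ∃ i₀, i₀ ∈ S := Finset.card_pos.mp (by omega)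
        have h1 := hw i₀ hi₀ j hj
        have h2 := hw i₀ hi₀ j₀ hj₀
        linarith
      have hws : (∑ i, w i) = S.card * (w j₀ + π/2) + Sᶜ.card * w j₀ := by
        rw [← Finset.sum_add_sum_compl S]
        rw [Finset.sum_congr rfl (fun i hi => hwS i hi),
          Finset.sum_congr rfl (fun i hi => hwT i (Finset.mem_compl.mp hi))]
        rw [Finset.sum_const, Finset.sum_const, nsmul_eq_mul, nsmul_eq_mul]
      rw [hwsum] at hws
      rw [hcompl] at hws
      have hn0 : (n:ℝ) ≠ 0 := hnR.ne'
      have hws' : (n:ℝ) * w j₀ + S.card * (π/2) = 0 := by linear_combination -hws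
      have hwj₀ : w j₀ = b := by
        rw [hb]
        field_simp
        linarith [hws']
      funext i
      by_cases hi : i ∈ S
      · rw [hwS i hi, hwj₀, (hxS i).1 hi]; linarith [hab]
      · rw [hwT i hi, hwj₀, (hxS i).2 hi]
    -- derive the equality of differences
    have hdiff : ∀ i ∈ S, ∀ j ∉ S, y i - y j = π / 2 ∧ z i - z j = π / 2 := by
      intro i hi j hj
      have hx' : x i - x j = π / 2 := by
        rw [(hxS i).1 hi, (hxS j).2 hj]; exact hab
      have hy : y i - y j ≤ π / 2 := (abs_le.mp (hypair i j)).2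
      have hz : z i - z j ≤ π / 2 := (abs_le.mp (hzpair i j)).2
      have hc : t₁ * (y i - y j) + t₂ * (z i - z j) = π / 2 := by
        have hi' := congrFun hxyz i
        have hj' := congrFun hxyz j
        simp only [Pi.add_apply, Pi.smul_apply, smul_eq_mul] at hi' hj'
        rw [← hx']
        linear_combination hi' - hj'
      constructor <;>
        nlinarith [mul_le_mul_of_nonneg_left hy ht₁.le, mul_le_mul_of_nonneg_left hz ht₂.le]
    constructor
    · exact key y hysum hypair (fun i hi j hj => (hdiff i hi j hj).1)
    · exact key z hzsum hzpair (fun i hi j hj => (hdiff i hi j hj).2)
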